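/- Let n, k ∈ ℕ⁺, let P be the permutation matrix on index set Fin n × Fin k of the bijection (i, r) ↦ (i+1 mod n, r), let S be the k × k down-shift matrix (S(r,r′) = 1 if r = r′+1, else 0), and let X be the block-diagonal matrix whose block 0 is S and whose every other block is the k × k identity. Then for every j ∈ Fin n, every s : Fin n × Fin k → ℝ, and every e ∈ ℝ, the vector (P^j * X * (Pᵀ)^j).mulVec s + e · δ_{(j,0)} (where δ_{(j,0)} is the standard basis vector supported at (j,0)) equals the shift-and-insert update u(s,(j,e)), i.e. its value at coordinate (i,r) is: e if (i,r) = (j,0); s(j, r−1) if i = j and r > 0; and s(i,r) if i ≠ j. -/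

import Mathlib

open Matrix

/-- The shift-and-insert update: `shiftInsert s (j, e)` writes `e` into slot 0
of block `j`, shifts the previous contents of block `j` down by one slot
(discarding the last), and leaves all other blocks unchanged. -/
def shiftInsert {n k : ℕ} [NeZero k] (s : Fin n × Fin k → ℝ)
    (je : Fin n × ℝ) : Fin n × Fin k → ℝ := fun p =>
  if p = (je.1, 0) then je.2
  else if p.1 = je.1 then s (je.1, p.2 - 1)
  else s p

/-- With `P` the block-cycling permutation matrix, `S` the
`k × k` down-shift matrix, and `X` the block-diagonal matrix whose block `0`
is `S` and whose other blocks are the identity, for every `j`, `s`, `e` the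
vector `(P^j * X * (Pᵀ)^j).mulVec s + e • δ_{(j,0)}` equals the
shift-and-insert update `shiftInsert s (j, e)`. -/
theorem linear_form_of_shiftInsert (n k : ℕ) [NeZero n] [NeZero k]
    (P : Matrix (Fin n × Fin k) (Fin n × Fin k) ℝ)
    (hP : ∀ a b : Fin n × Fin k,
      P a b = if a.1 = b.1 + 1 ∧ a.2 = b.2 then 1 else 0)
    (S : Matrix (Fin k) (Fin k) ℝ)
    (hS : ∀ r r' : Fin k, S r r' = if (r : ℕ) = (r' : ℕ) + 1 then 1 else 0)
    (X : Matrix (Fin n × Fin k) (Fin n × Fin k) ℝ)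
    (hX0 : ∀ r r' : Fin k, X ((0 : Fin n), r) ((0 : Fin n), r') = S r r')
    (hXI : ∀ (i : Fin n) (r r' : Fin k), i ≠ 0 →
      X (i, r) (i, r') = if r = r' then 1 else 0)
    (hXoff : ∀ (i i' : Fin n) (r r' : Fin k), i ≠ i' → X (i, r) (i', r') = 0) :
    ∀ (j : Fin n) (s : Fin n × Fin k → ℝ) (e : ℝ),
      (P ^ (j : ℕ) * X * Pᵀ ^ (j : ℕ)).mulVec s
          + e • (Pi.single ((j, 0) : Fin n × Fin k) (1 : ℝ) : Fin n × Fin k → ℝ)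
        = shiftInsert s (j, e) := by
  intro j s e
  have hsub1 : ∀ r : Fin k, r ≠ 0 → ((r - 1 : Fin k) : ℕ) = (r : ℕ) - 1 := by
    intro r h
    have hr : 0 < (r : ℕ) := Nat.pos_of_ne_zero (fun hh => h (Fin.ext hh))
    have hk : 1 < k := by
      by_contra hk
      have : k = 1 := by have := Fin.pos r; omega
      subst this
      exact h (Subsingleton.elim r 0)
    have h1 : ((1 : Fin k) : ℕ) = 1 := by
      rw [Fin.val_one']; exact Nat.mod_eq_of_lt hk
    have hle : (1 : Fin k) ≤ r := by rw [Fin.le_def, h1]; omega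
    rw [Fin.coe_sub_iff_le.2 hle, h1]
  -- single-step action of P
  have hPv : ∀ (v : Fin n × Fin k → ℝ) (a : Fin n × Fin k),
      P.mulVec v a = v (a.1 - 1, a.2) := by
    intro v a
    simp only [Matrix.mulVec, dotProduct]
    rw [Finset.sum_eq_single ((a.1 - 1, a.2) : Fin n × Fin k)]
    · rw [hP]; simp
    · rintro ⟨i', r'⟩ - hb
      rw [hP, if_neg, zero_mul]
      rintro ⟨h1, h2⟩
      exact hb (Prod.ext (eq_sub_of_add_eq h1.symm) h2.symm)
    · intro h; exact absurd (Finset.mem_univ _) h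
  have hPTv : ∀ (v : Fin n × Fin k → ℝ) (a : Fin n × Fin k),
      Pᵀ.mulVec v a = v (a.1 + 1, a.2) := by
    intro v a
    simp only [Matrix.mulVec, dotProduct, Matrix.transpose_apply]
    rw [Finset.sum_eq_single ((a.1 + 1, a.2) : Fin n × Fin k)]
    · rw [hP]; simp
    · rintro ⟨i', r'⟩ - hb
      rw [hP, if_neg, zero_mul]
      rintro ⟨h1, h2⟩
      exact hb (Prod.ext h1 h2)
    · intro h; exact absurd (Finset.mem_univ _) h
  open Fin.NatCast in
  have hPpow : ∀ (m : ℕ) (v : Fin n × Fin k → ℝ) (a : Fin n × Fin k),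
      (P ^ m).mulVec v a = v (a.1 - (m : Fin n), a.2) := by
    intro m
    induction m with
    | zero => intro v a; simp
    | succ m ih =>
      intro v a
      rw [pow_succ, ← Matrix.mulVec_mulVec, ih, hPv]
      congr 1
      have : ((m + 1 : ℕ) : Fin n) = (m : Fin n) + 1 := by push_cast; ring
      simp [this, sub_sub]
  open Fin.NatCast in
  have hPTpow : ∀ (m : ℕ) (v : Fin n × Fin k → ℝ) (a : Fin n × Fin k),
      (Pᵀ ^ m).mulVec v a = v (a.1 + (m : Fin n), a.2) := by
    intro m
    induction m with
    | zero => intro v a; simp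
    | succ m ih =>
      intro v a
      rw [pow_succ, ← Matrix.mulVec_mulVec, ih, hPTv]
      congr 1
      have : ((m + 1 : ℕ) : Fin n) = (m : Fin n) + 1 := by push_cast; ring
      simp [this, add_assoc]
  -- action of X
  have hXv : ∀ (w : Fin n × Fin k → ℝ) (i : Fin n) (r : Fin k),
      X.mulVec w (i, r) =
        if i = 0 then (if r = 0 then 0 else w (0, r - 1)) else w (i, r) := by
    intro w i r
    simp only [Matrix.mulVec, dotProduct]
    rcases eq_or_ne i 0 with hi | hi
    · subst hi
      rcases eq_or_ne r 0 with hr | hr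
      · subst hr
        rw [if_pos rfl, if_pos rfl]
        apply Finset.sum_eq_zero
        rintro ⟨i', r'⟩ -
        rcases eq_or_ne (0 : Fin n) i' with h | h
        · rw [← h, hX0, hS]; simp
        · rw [hXoff _ _ _ _ h, zero_mul]
      · rw [if_pos rfl, if_neg hr]
        have hrval : ((r - 1 : Fin k) : ℕ) = (r : ℕ) - 1 := hsub1 r hr
        have hrpos : 0 < (r : ℕ) := Nat.pos_of_ne_zero (fun h => hr (Fin.ext h))
        rw [Finset.sum_eq_single ((0, r - 1) : Fin n × Fin k)]
        · rw [hX0, hS, hrval, if_pos (by omega)]; simp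
        · rintro ⟨i', r'⟩ - hb
          rcases eq_or_ne (0 : Fin n) i' with h | h
          · rw [← h, hX0, hS]
            rcases eq_or_ne ((r : ℕ)) ((r' : ℕ) + 1) with h2 | h2
            · exfalso
              apply hb
              rw [← h]
              have : r' = r - 1 := Fin.ext (by omega)
              rw [this]
            · simp [h2]
          · rw [hXoff _ _ _ _ h, zero_mul]
        · intro h; exact absurd (Finset.mem_univ _) h
    · rw [if_neg hi]
      rw [Finset.sum_eq_single ((i, r) : Fin n × Fin k)]
      · rw [hXI _ _ _ hi]; simp
      · rintro ⟨i', r'⟩ - hb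
        rcases eq_or_ne i i' with h | h
        · subst h
          rw [hXI _ _ _ hi, if_neg (fun h2 => hb (by rw [h2])), zero_mul]
        · rw [hXoff _ _ _ _ h, zero_mul]
      · intro h; exact absurd (Finset.mem_univ _) h
  funext p
  rcases p with ⟨i, r⟩
  open Fin.NatCast in
  have hcast : (((j : ℕ) : Fin n)) = j := Fin.cast_val_eq_self j
  rw [mul_assoc]
  have hmv : (P ^ (j : ℕ) * (X * Pᵀ ^ (j : ℕ))).mulVec s (i, r)
      = X.mulVec ((Pᵀ ^ (j : ℕ)).mulVec s) (i - j, r) := by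
    rw [← Matrix.mulVec_mulVec, hPpow, ← Matrix.mulVec_mulVec, hcast]
  simp only [Pi.add_apply, Pi.smul_apply, smul_eq_mul, hmv, hXv, hPTpow, hcast]
  simp only [shiftInsert]
  rcases eq_or_ne i j with hij | hij
  · subst hij
    rw [if_pos (sub_self i)]
    rcases eq_or_ne r 0 with hr | hr
    · subst hr
      simp [Pi.single_apply]
    · rw [if_neg hr, if_neg (by simp [Prod.ext_iff, hr]), if_pos rfl]
      simp [Pi.single_apply, hr, zero_add]
  · have h1 : i - j ≠ 0 := fun h => hij (by rwa [sub_eq_zero] at h)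
    rw [if_neg h1]
    have h2 : i - j + j = i := by abel
    rw [h2, if_neg (by simp [Prod.ext_iff, hij]), if_neg hij]
    simp [Pi.single_apply, Prod.ext_iff, hij]
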